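/- Bailey's product formula for ₀F₁: for every complex number x and ρ ∈ ℂ not a nonpositive integer, (∑_{m=0}^{∞} x^m/((ρ)_m m!)) · (∑_{n=0}^{∞} (−x)^n/((ρ)_n n!)) = ∑_{m=0}^{∞} (−x²/4)^m / ( (ρ)_m (ρ/2)_m ((ρ+1)/2)_m m! ), i.e., ₀F₁(−; ρ; x) · ₀F₁(−; ρ; −x) = ₀F₃(−; ρ, ρ/2, (ρ+1)/2; −x²/4). -/

import Mathlib

open Finset Polynomial

noncomputable def poch (a : ℂ) (n : ℕ) : ℂ := (ascPochhammer ℂ n).eval a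

lemma poch_zero (a : ℂ) : poch a 0 = 1 := by simp [poch]

lemma poch_succ (a : ℂ) (n : ℕ) : poch a (n + 1) = poch a n * (a + n) :=
  ascPochhammer_succ_eval n a

lemma poch_ne_zero {a : ℂ} (h : ∀ k : ℕ, a ≠ -(k : ℂ)) (n : ℕ) : poch a n ≠ 0 := by
  induction n with
  | zero => simp [poch_zero]
  | succ n ih =>
    rw [poch_succ]
    refine mul_ne_zero ih fun hc => h n ?_
    linear_combination hc

lemma poch_add (a : ℂ) (n k : ℕ) : poch a (n + k) = poch a n * poch (a + n) k := by
  induction k with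
  | zero => simp [poch_zero]
  | succ k ih =>
    rw [← add_assoc, poch_succ, ih, poch_succ, mul_assoc]
    push_cast
    ring_nf

lemma poch_dup (ρ : ℂ) (m : ℕ) :
    poch ρ (2 * m) = 4 ^ m * poch (ρ / 2) m * poch ((ρ + 1) / 2) m := by
  induction m with
  | zero => simp [poch_zero]
  | succ m ih =>
    have : 2 * (m + 1) = 2 * m + 1 + 1 := by ring
    rw [this, poch_succ, poch_succ, ih, poch_succ, poch_succ]
    push_cast
    ring

lemma one_sub_pow_expand (N : ℕ) (p : ℂ[X]) :
    (1 - p) ^ N = ∑ k ∈ range (N + 1), C ((-1 : ℂ) ^ k * N.choose k) * p ^ k := by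
  rw [sub_eq_add_neg, add_comm, add_pow]
  refine sum_congr rfl fun k _ => ?_
  rw [neg_pow, one_pow, mul_comm ((-1 : ℂ) ^ k), map_mul, map_pow, map_neg, map_one,
    C_eq_natCast]
  ring

lemma coeff_one_sub_X_pow (N j : ℕ) :
    ((1 - X : ℂ[X]) ^ N).coeff j = (-1) ^ j * N.choose j := by
  rw [one_sub_pow_expand, finset_sum_coeff]
  simp only [coeff_C_mul, coeff_X_pow, mul_ite, mul_one, mul_zero]
  rw [Finset.sum_ite_eq (range (N + 1)) j fun k => (-1 : ℂ) ^ k * N.choose k]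
  split_ifs with h
  · rfl
  · rw [mem_range, not_lt] at h
    rw [Nat.choose_eq_zero_of_lt (by omega)]
    simp

lemma coeff_one_sub_X_sq_pow (N j : ℕ) :
    ((1 - X ^ 2 : ℂ[X]) ^ N).coeff j =
      if j % 2 = 0 then (-1 : ℂ) ^ (j / 2) * N.choose (j / 2) else 0 := by
  rw [one_sub_pow_expand, finset_sum_coeff]
  simp only [coeff_C_mul, ← pow_mul, coeff_X_pow, mul_ite, mul_one, mul_zero]
  rcases Nat.even_or_odd j with he | ho
  · obtain ⟨m, rfl⟩ := he
    have hm : m + m = 2 * m := by ring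
    rw [hm]
    have : ∀ k ∈ range (N + 1), (if 2 * m = 2 * k then (-1 : ℂ) ^ k * N.choose k else 0)
        = if m = k then (-1 : ℂ) ^ k * N.choose k else 0 := by
      intro k _
      exact if_congr (by omega) rfl rfl
    rw [Finset.sum_congr rfl this,
      Finset.sum_ite_eq (range (N + 1)) m fun k => (-1 : ℂ) ^ k * N.choose k]
    have hmod : (2 * m) % 2 = 0 := by omega
    have hdiv : (2 * m) / 2 = m := by omega
    rw [if_pos hmod, hdiv]
    split_ifs with h
    · rfl
    · rw [mem_range, not_lt] at h
      rw [Nat.choose_eq_zero_of_lt (by omega)]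
      simp
  · obtain ⟨m, rfl⟩ := ho
    rw [Finset.sum_eq_zero, if_neg (by omega)]
    intro k _
    rw [if_neg (by omega)]

lemma binom_id (N n : ℕ) :
    ∑ k ∈ range (n + 1), (-1 : ℂ) ^ k * N.choose k * N.choose (n - k)
      = if n % 2 = 0 then (-1 : ℂ) ^ (n / 2) * N.choose (n / 2) else 0 := by
  have hp : ((1 - X) ^ N * (1 + X) ^ N : ℂ[X]) = (1 - X ^ 2) ^ N := by
    rw [← mul_pow]; ring_nf
  have := congrArg (fun q : ℂ[X] => q.coeff n) hp
  simp only [coeff_mul, Finset.Nat.sum_antidiagonal_eq_sum_range_succ_mk] at this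
  rw [← coeff_one_sub_X_sq_pow, ← this]
  refine sum_congr rfl fun k _ => ?_
  rw [coeff_one_sub_X_pow, coeff_one_add_X_pow, mul_assoc]

lemma key_even (m : ℕ) (y : ℂ) :
    ∑ k ∈ range (2 * m + 1), (-1 : ℂ) ^ k * ((2 * m).choose k) *
        ((descPochhammer ℂ k).eval y * (descPochhammer ℂ (2 * m - k)).eval y)
      = (-1 : ℂ) ^ m * m.factorial * ((2 * m).choose m) * (descPochhammer ℂ m).eval y := by
  have hpoly : (∑ k ∈ range (2 * m + 1), C ((-1 : ℂ) ^ k * ((2 * m).choose k)) *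
        (descPochhammer ℂ k * descPochhammer ℂ (2 * m - k)))
      = C ((-1 : ℂ) ^ m * m.factorial * ((2 * m).choose m)) * descPochhammer ℂ m := by
    apply Polynomial.eq_of_infinite_eval_eq
    apply Set.infinite_of_injective_forall_mem (f := (Nat.cast : ℕ → ℂ)) Nat.cast_injective
    intro N
    simp only [Set.mem_setOf_eq, eval_finset_sum, eval_mul, eval_C,
      descPochhammer_eval_eq_descFactorial]
    have key := binom_id N (2 * m)
    rw [if_pos (by omega), show 2 * m / 2 = m from by omega] at key
    calc ∑ k ∈ range (2 * m + 1), (-1 : ℂ) ^ k * ((2 * m).choose k) *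
            ((N.descFactorial k : ℂ) * (N.descFactorial (2 * m - k) : ℂ))
        = ∑ k ∈ range (2 * m + 1), ((2 * m).factorial : ℂ) *
            ((-1 : ℂ) ^ k * N.choose k * N.choose (2 * m - k)) := by
          refine sum_congr rfl fun k hk => ?_
          rw [mem_range] at hk
          rw [Nat.descFactorial_eq_factorial_mul_choose, Nat.descFactorial_eq_factorial_mul_choose]
          have h2 : (((2 * m).choose k : ℂ)) * k.factorial * (2 * m - k).factorial
              = (2 * m).factorial := by
            exact_mod_cast congrArg (Nat.cast : ℕ → ℂ)
              (Nat.choose_mul_factorial_mul_factorial (show k ≤ 2 * m by omega))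
          push_cast
          linear_combination (-1 : ℂ) ^ k * N.choose k * N.choose (2 * m - k) * h2
      _ = ((2 * m).factorial : ℂ) * ((-1 : ℂ) ^ m * N.choose m) := by
          rw [← mul_sum, key]
      _ = (-1 : ℂ) ^ m * m.factorial * ((2 * m).choose m) * (N.descFactorial m : ℂ) := by
          rw [Nat.descFactorial_eq_factorial_mul_choose]
          have h2 : (((2 * m).choose m : ℂ)) * m.factorial * m.factorial
              = (2 * m).factorial := by
            have := Nat.choose_mul_factorial_mul_factorial (show m ≤ 2 * m by omega)
            rw [show 2 * m - m = m from by omega] at this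
            exact_mod_cast congrArg (Nat.cast : ℕ → ℂ) this
          push_cast
          linear_combination -((-1 : ℂ) ^ m * (N.choose m : ℂ) * h2)
  have := congrArg (eval y) hpoly
  simpa [eval_finset_sum, mul_assoc] using this

lemma dpe_eq (ρ : ℂ) (n k : ℕ) (hk : k ≤ n) :
    (descPochhammer ℂ k).eval (ρ + n - 1) = poch (ρ + ((n - k : ℕ) : ℂ)) k := by
  rw [descPochhammer_eval_eq_ascPochhammer]
  unfold poch
  congr 1
  push_cast [Nat.cast_sub hk]
  ring

lemma poch_split (ρ : ℂ) (n k : ℕ) (hk : k ≤ n) :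
    poch ρ n = poch ρ (n - k) * poch (ρ + ((n - k : ℕ) : ℂ)) k := by
  conv_lhs => rw [← Nat.sub_add_cancel hk]
  exact poch_add ρ (n - k) k

lemma term_even (ρ : ℂ) (hρ : ∀ k : ℕ, ρ ≠ -(k : ℂ)) (x : ℂ) (m k : ℕ) (hk : k ≤ 2 * m) :
    x ^ k / (poch ρ k * k.factorial) * ((-x) ^ (2 * m - k) / (poch ρ (2 * m - k) * (2 * m - k).factorial))
      = x ^ (2 * m) / ((2 * m).factorial * poch ρ (2 * m) ^ 2) *
        ((-1 : ℂ) ^ k * ((2 * m).choose k) *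
          ((descPochhammer ℂ k).eval (ρ + (2 * m : ℕ) - 1) *
           (descPochhammer ℂ (2 * m - k)).eval (ρ + (2 * m : ℕ) - 1))) := by
  obtain ⟨j, hj⟩ : ∃ j, 2 * m = k + j := ⟨2 * m - k, by omega⟩
  rw [hj]
  rw [show k + j - k = j from by omega]
  have hA : poch ρ k ≠ 0 := poch_ne_zero hρ k
  have hB : poch ρ j ≠ 0 := poch_ne_zero hρ _
  have e1 : poch ρ (k + j) = poch ρ j * poch (ρ + ((j : ℕ) : ℂ)) k := by
    have := poch_split ρ (k + j) k (by omega)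
    rwa [show k + j - k = j from by omega] at this
  have e2 : poch ρ (k + j) = poch ρ k * poch (ρ + ((k : ℕ) : ℂ)) j := by
    have := poch_split ρ (k + j) j (by omega)
    rwa [show k + j - j = k from by omega] at this
  have hU : poch (ρ + ((j : ℕ) : ℂ)) k ≠ 0 := by
    intro h; exact poch_ne_zero hρ (k + j) (by rw [e1, h, mul_zero])
  have hV : poch (ρ + ((k : ℕ) : ℂ)) j ≠ 0 := by
    intro h; exact poch_ne_zero hρ (k + j) (by rw [e2, h, mul_zero])
  have hd1 : (descPochhammer ℂ k).eval (ρ + ((k + j : ℕ) : ℂ) - 1)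
      = poch (ρ + ((j : ℕ) : ℂ)) k := by
    have := dpe_eq ρ (k + j) k (by omega)
    rwa [show k + j - k = j from by omega] at this
  have hd2 : (descPochhammer ℂ j).eval (ρ + ((k + j : ℕ) : ℂ) - 1)
      = poch (ρ + ((k : ℕ) : ℂ)) j := by
    have := dpe_eq ρ (k + j) j (by omega)
    rwa [show k + j - j = k from by omega] at this
  rw [hd1, hd2]
  have hfac : (((k + j).choose k : ℂ)) * k.factorial * j.factorial = (k + j).factorial := by
    have := Nat.choose_mul_factorial_mul_factorial (show k ≤ k + j by omega)
    rw [show k + j - k = j from by omega] at this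
    exact_mod_cast congrArg (Nat.cast : ℕ → ℂ) this
  have hsign : (-1 : ℂ) ^ k * (-1 : ℂ) ^ j = 1 := by
    rw [← pow_add, ← hj, pow_mul]; norm_num
  have ha2 : ((-1 : ℂ) ^ k) * ((-1 : ℂ) ^ k) = 1 := by
    rw [← pow_add, ← two_mul, pow_mul]; norm_num
  have hfk : (k.factorial : ℂ) ≠ 0 := Nat.cast_ne_zero.mpr k.factorial_ne_zero
  have hfj : (j.factorial : ℂ) ≠ 0 := Nat.cast_ne_zero.mpr (Nat.factorial_ne_zero _)
  have hfkj : ((k + j).factorial : ℂ) ≠ 0 := Nat.cast_ne_zero.mpr (Nat.factorial_ne_zero _)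
  have hP2 : poch ρ (k + j) ^ 2 = (poch ρ j * poch (ρ + ((j : ℕ) : ℂ)) k) *
      (poch ρ k * poch (ρ + ((k : ℕ) : ℂ)) j) := by
    rw [sq]; nth_rewrite 1 [e1]; rw [e2]
  rw [hP2, pow_add x k j, neg_pow, div_mul_div_comm, div_mul_eq_mul_div, div_eq_div_iff
    (by exact mul_ne_zero (mul_ne_zero hA hfk) (mul_ne_zero hB hfj))
    (by exact mul_ne_zero hfkj (mul_ne_zero (mul_ne_zero hB hU) (mul_ne_zero hA hV)))]
  linear_combination (x ^ k * x ^ j * poch (ρ + ((j : ℕ) : ℂ)) k * poch (ρ + ((k : ℕ) : ℂ)) j *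
      poch ρ k * poch ρ j * ((k + j).factorial : ℂ)) *
      ((-1 : ℂ) ^ k * hsign - (-1 : ℂ) ^ j * ha2)
    - (x ^ k * x ^ j * poch (ρ + ((j : ℕ) : ℂ)) k * poch (ρ + ((k : ℕ) : ℂ)) j *
      poch ρ k * poch ρ j * (-1 : ℂ) ^ k) * hfac

lemma c_even (ρ : ℂ) (hρ : ∀ k : ℕ, ρ ≠ -(k : ℂ)) (hρ2 : ∀ k : ℕ, ρ / 2 ≠ -(k : ℂ))
    (hρ3 : ∀ k : ℕ, (ρ + 1) / 2 ≠ -(k : ℂ)) (x : ℂ) (m : ℕ) :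
    ∑ k ∈ range (2 * m + 1), x ^ k / (poch ρ k * k.factorial) *
        ((-x) ^ (2 * m - k) / (poch ρ (2 * m - k) * (2 * m - k).factorial))
      = (-x ^ 2 / 4) ^ m /
          (poch ρ m * poch (ρ / 2) m * poch ((ρ + 1) / 2) m * m.factorial) := by
  have h1 : ∀ k ∈ range (2 * m + 1),
      x ^ k / (poch ρ k * k.factorial) *
        ((-x) ^ (2 * m - k) / (poch ρ (2 * m - k) * (2 * m - k).factorial))
      = x ^ (2 * m) / ((2 * m).factorial * poch ρ (2 * m) ^ 2) *
        ((-1 : ℂ) ^ k * ((2 * m).choose k) *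
          ((descPochhammer ℂ k).eval (ρ + (2 * m : ℕ) - 1) *
           (descPochhammer ℂ (2 * m - k)).eval (ρ + (2 * m : ℕ) - 1))) :=
    fun k hk => term_even ρ hρ x m k (by simpa [Nat.lt_succ_iff] using hk)
  rw [sum_congr rfl h1, ← mul_sum, key_even m (ρ + ((2 * m : ℕ) : ℂ) - 1)]
  have hd : (descPochhammer ℂ m).eval (ρ + ((2 * m : ℕ) : ℂ) - 1)
      = poch (ρ + ((m : ℕ) : ℂ)) m := by
    have := dpe_eq ρ (2 * m) m (by omega)
    rwa [show 2 * m - m = m from by omega] at this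
  rw [hd]
  have hW : poch ρ (2 * m) = poch ρ m * poch (ρ + ((m : ℕ) : ℂ)) m := by
    have := poch_add ρ m m
    rwa [show m + m = 2 * m from by omega] at this
  have hdup := poch_dup ρ m
  have hp1 : poch ρ m ≠ 0 := poch_ne_zero hρ m
  have hp2 : poch (ρ / 2) m ≠ 0 := poch_ne_zero hρ2 m
  have hp3 : poch ((ρ + 1) / 2) m ≠ 0 := poch_ne_zero hρ3 m
  have hW0 : poch (ρ + ((m : ℕ) : ℂ)) m ≠ 0 := by
    intro h; exact poch_ne_zero hρ (2 * m) (by rw [hW, h, mul_zero])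
  have hfm : (m.factorial : ℂ) ≠ 0 := Nat.cast_ne_zero.mpr m.factorial_ne_zero
  have hf2m : ((2 * m).factorial : ℂ) ≠ 0 := Nat.cast_ne_zero.mpr (Nat.factorial_ne_zero _)
  have h4 : (4 : ℂ) ^ m ≠ 0 := pow_ne_zero _ (by norm_num)
  have hfac2 : (((2 * m).choose m : ℂ)) * m.factorial * m.factorial = (2 * m).factorial := by
    have := Nat.choose_mul_factorial_mul_factorial (show m ≤ 2 * m by omega)
    rw [show 2 * m - m = m from by omega] at this
    exact_mod_cast congrArg (Nat.cast : ℕ → ℂ) this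
  have hxx : ((-x ^ 2 / 4 : ℂ)) ^ m = (-1 : ℂ) ^ m * x ^ (2 * m) / 4 ^ m := by
    rw [show (-x ^ 2 / 4 : ℂ) = (-1) * x ^ 2 / 4 by ring, div_pow, mul_pow, ← pow_mul]
  have hP2 : poch ρ (2 * m) ^ 2
      = (poch ρ m * poch (ρ + ((m : ℕ) : ℂ)) m) *
        (4 ^ m * poch (ρ / 2) m * poch ((ρ + 1) / 2) m) := by
    rw [sq]; nth_rewrite 1 [hW]; rw [hdup]
  rw [hxx, hP2, div_mul_eq_mul_div, div_div, div_eq_div_iff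
    (by exact mul_ne_zero hf2m (mul_ne_zero (mul_ne_zero hp1 hW0)
      (mul_ne_zero (mul_ne_zero h4 hp2) hp3)))
    (by exact mul_ne_zero h4 (mul_ne_zero (mul_ne_zero (mul_ne_zero hp1 hp2) hp3) hfm))]
  linear_combination (x ^ (2 * m) * (-1 : ℂ) ^ m * 4 ^ m * poch ρ m * poch (ρ / 2) m *
    poch ((ρ + 1) / 2) m * poch (ρ + ((m : ℕ) : ℂ)) m) * hfac2

lemma c_odd (ρ : ℂ) (hρ : ∀ k : ℕ, ρ ≠ -(k : ℂ)) (x : ℂ) (m : ℕ) :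
    ∑ k ∈ range (2 * m + 1 + 1), x ^ k / (poch ρ k * k.factorial) *
        ((-x) ^ (2 * m + 1 - k) / (poch ρ (2 * m + 1 - k) * (2 * m + 1 - k).factorial))
      = 0 := by
  set n := 2 * m + 1 with hn
  have hpair : ∀ k, k ≤ n →
      x ^ (n - k) / (poch ρ (n - k) * (n - k).factorial) *
        ((-x) ^ (n - (n - k)) / (poch ρ (n - (n - k)) * (n - (n - k)).factorial))
      = -(x ^ k / (poch ρ k * k.factorial) *
          ((-x) ^ (n - k) / (poch ρ (n - k) * (n - k).factorial))) := by
    intro k hk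
    rw [show n - (n - k) = k from by omega]
    have hA : poch ρ k ≠ 0 := poch_ne_zero hρ k
    have hB : poch ρ (n - k) ≠ 0 := poch_ne_zero hρ _
    have hfk : (k.factorial : ℂ) ≠ 0 := Nat.cast_ne_zero.mpr k.factorial_ne_zero
    have hfj : ((n - k).factorial : ℂ) ≠ 0 := Nat.cast_ne_zero.mpr (Nat.factorial_ne_zero _)
    have hsign : (-1 : ℂ) ^ k * (-1 : ℂ) ^ (n - k) = -1 := by
      rw [← pow_add, show k + (n - k) = n from by omega, hn, pow_succ, pow_mul]
      norm_num
    have ha2 : (-1 : ℂ) ^ k * (-1 : ℂ) ^ k = 1 := by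
      rw [← pow_add, ← two_mul, pow_mul]; norm_num
    rw [neg_pow, neg_pow]
    field_simp
    rw [neg_pow x (n - k)]
    linear_combination (x ^ k * x ^ (n - k)) *
      ((-1 : ℂ) ^ k * hsign - (-1 : ℂ) ^ (n - k) * ha2)
  have hS : (∑ k ∈ range (n + 1), x ^ k / (poch ρ k * k.factorial) *
        ((-x) ^ (n - k) / (poch ρ (n - k) * (n - k).factorial)))
      = -∑ k ∈ range (n + 1), x ^ k / (poch ρ k * k.factorial) *
        ((-x) ^ (n - k) / (poch ρ (n - k) * (n - k).factorial)) := by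
    conv_lhs => rw [← Finset.sum_range_reflect]
    rw [← Finset.sum_neg_distrib]
    refine sum_congr rfl fun k hk => ?_
    rw [mem_range, Nat.lt_succ_iff] at hk
    have := hpair k hk
    simpa [show n + 1 - 1 - k = n - k from by omega] using this
  linear_combination hS / 2

lemma summable_aux (ρ : ℂ) (hρ : ∀ k : ℕ, ρ ≠ -(k : ℂ)) (x : ℂ) :
    Summable (fun n : ℕ => ‖x ^ n / (poch ρ n * n.factorial)‖) := by
  apply summable_of_ratio_norm_eventually_le (r := 1 / 2) (by norm_num)
  filter_upwards [Filter.eventually_ge_atTop (⌈‖ρ‖⌉₊ + ⌈2 * ‖x‖⌉₊ + 1)] with n hn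
  have hρn : (‖ρ‖ : ℝ) + 1 ≤ n := by
    have h1 : ‖ρ‖ ≤ (⌈‖ρ‖⌉₊ : ℝ) := Nat.le_ceil _
    have h2 : ((⌈‖ρ‖⌉₊ + 1 : ℕ) : ℝ) ≤ n := by exact_mod_cast le_trans (by omega) hn
    push_cast at h2
    linarith
  have hxn : 2 * ‖x‖ ≤ (n : ℝ) + 1 := by
    have h1 : 2 * ‖x‖ ≤ (⌈2 * ‖x‖⌉₊ : ℝ) := Nat.le_ceil _
    have h2 : ((⌈2 * ‖x‖⌉₊ : ℕ) : ℝ) ≤ n := by exact_mod_cast le_trans (by omega) hn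
    linarith
  have h1 : (1 : ℝ) ≤ ‖ρ + n‖ := by
    have hnn : ‖((n : ℕ) : ℂ)‖ = (n : ℝ) := by
      simp
    have h3 : ‖((n : ℕ) : ℂ)‖ - ‖ρ‖ ≤ ‖ρ + n‖ := by
      have := norm_sub_le (ρ + (n : ℂ)) ρ
      simp only [add_sub_cancel_left] at this
      linarith [this]
    rw [hnn] at h3
    linarith
  have hpn : poch ρ n ≠ 0 := poch_ne_zero hρ n
  have hfn : ((n.factorial : ℕ) : ℂ) ≠ 0 := Nat.cast_ne_zero.mpr n.factorial_ne_zero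
  have hρn0 : (ρ + n) ≠ 0 := by
    intro h
    have : ‖ρ + (n : ℂ)‖ = 0 := by rw [h]; simp
    linarith
  have hrel : x ^ (n + 1) / (poch ρ (n + 1) * ((n + 1).factorial : ℂ))
      = x ^ n / (poch ρ n * (n.factorial : ℂ)) * (x / ((ρ + n) * ((n + 1 : ℕ) : ℂ))) := by
    rw [poch_succ, Nat.factorial_succ]
    push_cast
    field_simp
    ring
  rw [norm_norm, norm_norm, hrel, norm_mul]
  have hb : ‖x / ((ρ + n) * ((n + 1 : ℕ) : ℂ))‖ ≤ 1 / 2 := by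
    rw [norm_div, norm_mul]
    have hnn1 : ‖(((n + 1 : ℕ)) : ℂ)‖ = (n : ℝ) + 1 := by
      rw [Complex.norm_natCast]
      push_cast
      ring
    rw [hnn1]
    rw [div_le_iff₀ (by positivity)]
    calc ‖x‖ ≤ ((n : ℝ) + 1) / 2 := by linarith
      _ ≤ 1 / 2 * (‖ρ + ↑n‖ * ((n : ℝ) + 1)) := by
          rw [div_eq_mul_inv, mul_comm]
          have : (1 : ℝ) * ((n : ℝ) + 1) ≤ ‖ρ + ↑n‖ * ((n : ℝ) + 1) := by
            apply mul_le_mul_of_nonneg_right h1 (by positivity)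
          linarith
  calc ‖x ^ n / (poch ρ n * ↑n.factorial)‖ * ‖x / ((ρ + ↑n) * ((n + 1 : ℕ) : ℂ))‖
      ≤ ‖x ^ n / (poch ρ n * ↑n.factorial)‖ * (1 / 2) :=
        mul_le_mul_of_nonneg_left hb (norm_nonneg _)
    _ = 1 / 2 * ‖x ^ n / (poch ρ n * ↑n.factorial)‖ := by ring

theorem stmt6 (ρ : ℂ) (hρ : ∀ k : ℕ, ρ ≠ -(k : ℂ))
    (hρ2 : ∀ k : ℕ, ρ / 2 ≠ -(k : ℂ)) (hρ3 : ∀ k : ℕ, (ρ + 1) / 2 ≠ -(k : ℂ))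
    (x : ℂ) :
    (∑' (m : ℕ), x ^ m / (poch ρ m * m.factorial)) *
      (∑' (n : ℕ), (-x) ^ n / (poch ρ n * n.factorial))
      = ∑' (m : ℕ), (-x ^ 2 / 4) ^ m /
          (poch ρ m * poch (ρ / 2) m * poch ((ρ + 1) / 2) m * m.factorial) := by
  have hsf := summable_aux ρ hρ x
  have hsg := summable_aux ρ hρ (-x)
  rw [tsum_mul_tsum_eq_tsum_sum_antidiagonal_of_summable_norm hsf hsg]
  set c : ℕ → ℂ := fun n => ∑ k ∈ range (n + 1),
    x ^ k / (poch ρ k * k.factorial) *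
      ((-x) ^ (n - k) / (poch ρ (n - k) * (n - k).factorial)) with hcdef
  have hc : ∀ n : ℕ, (∑ kl ∈ Finset.HasAntidiagonal.antidiagonal n,
      x ^ kl.1 / (poch ρ kl.1 * kl.1.factorial) *
        ((-x) ^ kl.2 / (poch ρ kl.2 * kl.2.factorial))) = c n := fun n =>
    Finset.Nat.sum_antidiagonal_eq_sum_range_succ_mk _ n
  rw [tsum_congr hc]
  have hinj : Function.Injective (fun m : ℕ => 2 * m) := fun a b h => Nat.eq_of_mul_eq_mul_left (by norm_num) h
  have hsupp : Function.support c ⊆ Set.range (fun m : ℕ => 2 * m) := by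
    intro n hn
    by_contra hr
    apply hn
    have hodd : ∃ m, n = 2 * m + 1 := by
      rcases Nat.even_or_odd n with ⟨m, rfl⟩ | ⟨m, rfl⟩
      · exact absurd ⟨m, two_mul m⟩ hr
      · exact ⟨m, rfl⟩
    obtain ⟨m, rfl⟩ := hodd
    exact c_odd ρ hρ x m
  rw [← Function.Injective.tsum_eq hinj hsupp]
  exact tsum_congr fun m => c_even ρ hρ hρ2 hρ3 x m
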